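/- Let X be a Banach space with dual X*, and let φ₁(x) = ⟨z₁*,x⟩ + d₁ and φ₂(x) = ⟨z₂*,x⟩ + d₂ be affine continuous functions, and β ∈ ℝ, ε > 0. Then {x : φ₁(x) < β - ε} ∩ {x : φ₂(x) < β - ε} = ∅ if and only if there exists t₀ ∈ [0,1] with t₀ z₁* + (1-t₀) z₂* = 0 and t₀ d₁ + (1-t₀) d₂ ≥ β - ε. -/

import Mathlib

/-- If `c ≤ t * r + s` for all real `t`, then `r = 0`. -/
lemma aux_zero (r s c : ℝ) (h : ∀ t : ℝ, c ≤ t * r + s) : r = 0 := by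
  by_contra hr
  have h1 := h ((c - s - 1) / r)
  rw [div_mul_cancel₀ _ hr] at h1
  linarith

/-- For affine continuous φᵢ(x) = ⟨zᵢ*,x⟩ + dᵢ on a Banach space,
the strict sublevel sets at level β - ε are disjoint iff some convex combination
of z₁*, z₂* vanishes with the corresponding combination of d₁, d₂ at least β - ε. -/
theorem stmt_13 {X : Type*} [NormedAddCommGroup X] [NormedSpace ℝ X]
    [CompleteSpace X]
    (z₁ z₂ : X →L[ℝ] ℝ) (d₁ d₂ β ε : ℝ) (hε : 0 < ε) :
    ({x : X | z₁ x + d₁ < β - ε} ∩ {x : X | z₂ x + d₂ < β - ε} = ∅) ↔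
      ∃ t₀ : ℝ, 0 ≤ t₀ ∧ t₀ ≤ 1 ∧ t₀ • z₁ + (1 - t₀) • z₂ = 0 ∧
        β - ε ≤ t₀ * d₁ + (1 - t₀) * d₂ := by
  constructor
  · intro h
    have hdisj : ∀ x : X, z₁ x + d₁ < β - ε → ¬ (z₂ x + d₂ < β - ε) := by
      intro x h1 h2
      have hx : x ∈ ({x : X | z₁ x + d₁ < β - ε} ∩ {x : X | z₂ x + d₂ < β - ε}) := ⟨h1, h2⟩
      rw [h] at hx
      exact hx
    by_cases hA : ∃ a : X, z₁ a + d₁ < β - ε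
    · by_cases hB : ∃ b : X, z₂ b + d₂ < β - ε
      · obtain ⟨a, ha⟩ := hA
        obtain ⟨b, hb⟩ := hB
        -- z₁ ≠ 0
        have hz1 : ∃ u : X, z₁ u ≠ 0 := by
          by_contra hc
          push_neg at hc
          have h1 := hc a
          have h2 := hc b
          exact hdisj b (by rw [h2]; rw [h1] at ha; linarith) hb
        obtain ⟨u, hu⟩ := hz1
        set u' : X := (z₁ u)⁻¹ • u with hu'def
        have hu1 : z₁ u' = 1 := by
          simp [hu'def, inv_mul_cancel₀ hu]
        set μ : ℝ := z₂ u' with hμdef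
        -- kernel inclusion: z₁ y = 0 → z₂ y = 0
        have hker : ∀ y : X, z₁ y = 0 → z₂ y = 0 := by
          intro y hy
          have key : ∀ t : ℝ, β - ε ≤ t * z₂ y + (z₂ a + d₂) := by
            intro t
            have hmem : z₁ (a + t • y) + d₁ < β - ε := by
              simpa [map_add, map_smul, hy] using ha
            have hnot := hdisj _ hmem
            have := not_lt.mp hnot
            simp only [map_add, map_smul, smul_eq_mul] at this
            linarith
          exact aux_zero _ _ _ key
        -- z₂ = μ * z₁ pointwise
        have hz2 : ∀ x : X, z₂ x = μ * z₁ x := by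
          intro x
          have hy : z₁ (x - (z₁ x) • u') = 0 := by
            simp [map_sub, map_smul, hu1]
          have := hker _ hy
          simp only [map_sub, map_smul, smul_eq_mul] at this
          rw [← hμdef] at this
          linarith
        -- the key scalar inequality
        have hμs : ∀ s : ℝ, s + d₁ < β - ε → β - ε ≤ μ * s + d₂ := by
          intro s hs
          set x : X := a + (s - z₁ a) • u' with hxdef
          have hx1 : z₁ x = s := by
            simp [hxdef, map_add, map_smul, hu1]
          have hmem : z₁ x + d₁ < β - ε := by rw [hx1]; exact hs
          have hnot := not_lt.mp (hdisj _ hmem)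
          have hzx : z₂ x = μ * s := by rw [hz2 x, hx1]
          linarith [hnot, hzx ▸ hnot]
        -- μ ≤ 0
        have hμ0 : μ ≤ 0 := by
          by_contra hμ
          push_neg at hμ
          set s : ℝ := min (β - ε - d₁ - 1) ((β - ε - d₂ - 1) / μ) with hsdef
          have hs1 : s + d₁ < β - ε := by
            have := min_le_left (β - ε - d₁ - 1) ((β - ε - d₂ - 1) / μ)
            rw [← hsdef] at this
            linarith
          have hs2 : s ≤ (β - ε - d₂ - 1) / μ := by
            rw [hsdef]; exact min_le_right _ _
          have hmul : μ * s ≤ β - ε - d₂ - 1 := by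
            have := mul_le_mul_of_nonneg_left hs2 hμ.le
            rwa [mul_div_cancel₀ _ (ne_of_gt hμ)] at this
          have := hμs s hs1
          linarith
        -- μ ≠ 0
        have hμne : μ ≠ 0 := by
          intro hμ
          have h1 := hμs (β - ε - d₁ - 1) (by linarith)
          rw [hμ] at h1
          have h2 : z₂ b = 0 := by rw [hz2 b, hμ]; ring
          rw [h2] at hb
          linarith
        have hμlt : μ < 0 := lt_of_le_of_ne hμ0 hμne
        -- limiting inequality: β - ε - d₂ ≤ μ * (β - ε - d₁)
        have hlim : β - ε - d₂ ≤ μ * (β - ε - d₁) := by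
          by_contra hcc
          push_neg at hcc
          set δ : ℝ := (β - ε - d₂ - μ * (β - ε - d₁)) / (2 * (-μ)) with hδdef
          have hδpos : 0 < δ := by
            apply div_pos (by linarith) (by linarith)
          have hμδ : μ * δ = -(β - ε - d₂ - μ * (β - ε - d₁)) / 2 := by
            rw [hδdef]
            field_simp
          have h1 := hμs (β - ε - d₁ - δ) (by linarith)
          have h2 : μ * (β - ε - d₁ - δ) = μ * (β - ε - d₁) - μ * δ := by ring
          rw [h2, hμδ] at h1
          linarith
        -- assemble t₀
        refine ⟨(-μ) / (1 - μ), ?_, ?_, ?_, ?_⟩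
        · apply div_nonneg (by linarith) (by linarith)
        · rw [div_le_one (by linarith)]; linarith
        · ext x
          have hcoef : (-μ) / (1 - μ) + (1 - (-μ) / (1 - μ)) * μ = 0 := by
            have hne : (1:ℝ) - μ ≠ 0 := by linarith
            field_simp
            ring
          first
          | simp only [ContinuousLinearMap.add_apply, ContinuousLinearMap.coe_smul',
              Pi.add_apply, Pi.smul_apply, smul_eq_mul, ContinuousLinearMap.zero_apply]
          | skip
          rw [hz2 x]
          linear_combination z₁ x * hcoef
        · rw [← sub_nonneg]
          have heq : (-μ) / (1 - μ) * d₁ + (1 - (-μ) / (1 - μ)) * d₂ - (β - ε) =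
              (μ * (β - ε - d₁) - (β - ε - d₂)) / (1 - μ) := by
            have hne : (1:ℝ) - μ ≠ 0 := by linarith
            field_simp
            ring
          rw [heq]
          apply div_nonneg (by linarith) (by linarith)
      · -- set 2 empty: take t₀ = 0
        push_neg at hB
        refine ⟨0, le_refl _, by norm_num, ?_, ?_⟩
        · have hz : ∀ x : X, z₂ x = 0 := by
            intro x
            have key : ∀ t : ℝ, β - ε ≤ t * z₂ x + d₂ := by
              intro t
              have := hB (t • x)
              simpa [map_smul] using this
            exact aux_zero _ _ _ key
          ext x
          simp [hz x]
        · have := hB 0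
          simp at this
          simpa using this
    · -- set 1 empty: take t₀ = 1
      push_neg at hA
      refine ⟨1, by norm_num, le_refl _, ?_, ?_⟩
      · have hz : ∀ x : X, z₁ x = 0 := by
          intro x
          have key : ∀ t : ℝ, β - ε ≤ t * z₁ x + d₁ := by
            intro t
            have := hA (t • x)
            simpa [map_smul] using this
          exact aux_zero _ _ _ key
        ext x
        simp [hz x]
      · have := hA 0
        simp at this
        simpa using this
  · rintro ⟨t₀, h0, h1, hz, hd⟩
    rw [Set.eq_empty_iff_forall_notMem]
    rintro x ⟨hx1, hx2⟩
    simp only [Set.mem_setOf_eq] at hx1 hx2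
    have hzx : t₀ * z₁ x + (1 - t₀) * z₂ x = 0 := by
      have := congrArg (fun f : X →L[ℝ] ℝ => f x) hz
      simpa using this
    rcases h0.lt_or_eq with ht | ht
    · have A : t₀ * (z₁ x + d₁) < t₀ * (β - ε) :=
        mul_lt_mul_of_pos_left hx1 ht
      have B : (1 - t₀) * (z₂ x + d₂) ≤ (1 - t₀) * (β - ε) :=
        mul_le_mul_of_nonneg_left hx2.le (by linarith)
      nlinarith
    · have ht1 : t₀ = 0 := ht.symm
      rw [ht1] at hzx hd
      simp at hzx hd
      linarith
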